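/- arXiv:2402.05369 — 4 statements merged into one kernel-verified Lean document; each statement's English description precedes it below -/
import Mathlib

section
/- Let μ be a probability distribution on a finite set Y with μ(y) > 0, and π*(y) = μ(y)·exp(r(y)/α)/Z with Z = Σ_y μ(y)exp(r(y)/α). With the joint distribution of (ν, y₁,…,y_K) as in the InfoNCA setup (ν uniform, y_ν ~ π*, others i.i.d. μ), the posterior satisfies P(ν | y₁,…,y_K) = exp(r(y_ν)/α) / Σ_{i=1}^K exp(r(y_i)/α). -/
open Finset Real

/-- InfoNCA posterior: with π*(y) = μ(y)·exp(r(y)/α)/Z, the Bayes posterior of the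
positive index ν given the K responses is the softmax of rewards; the normalizer Z
cancels. -/
theorem infonca_posterior_softmax
    {Y : Type*} [Fintype Y]
    (μ : Y → ℝ) (hμpos : ∀ y, 0 < μ y) (hμsum : ∑ y, μ y = 1)
    (r : Y → ℝ) (α : ℝ) (hα : 0 < α)
    (Z : ℝ) (hZ : Z = ∑ y, μ y * Real.exp (r y / α))
    (piStar : Y → ℝ) (hπ : ∀ y, piStar y = μ y * Real.exp (r y / α) / Z)
    (K : ℕ) (hK : 1 ≤ K)
    (joint : Fin K → (Fin K → Y) → ℝ)
    (hjoint : ∀ (ν : Fin K) (ys : Fin K → Y),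
      joint ν ys = (1 / K) * piStar (ys ν) * ∏ i ∈ Finset.univ.erase ν, μ (ys i)) :
    ∀ (ν : Fin K) (ys : Fin K → Y),
      joint ν ys / (∑ k, joint k ys) =
        Real.exp (r (ys ν) / α) / ∑ i, Real.exp (r (ys i) / α) := by
  intro ν ys
  have hKpos : (0 : ℝ) < K := by exact_mod_cast hK
  have hZpos : 0 < Z := by
    rw [hZ]
    exact Finset.sum_pos (fun y _ => mul_pos (hμpos y) (Real.exp_pos _))
      ⟨ys ν, Finset.mem_univ _⟩
  set C : ℝ := (1 / K) * (∏ i, μ (ys i)) / Z with hC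
  have hCpos : 0 < C :=
    div_pos (mul_pos (by positivity) (Finset.prod_pos fun i _ => hμpos (ys i))) hZpos
  have hform : ∀ k : Fin K, joint k ys = C * Real.exp (r (ys k) / α) := by
    intro k
    rw [hjoint, hπ, hC,
      ← Finset.mul_prod_erase Finset.univ (fun i => μ (ys i)) (Finset.mem_univ k)]
    ring
  rw [hform ν, Finset.sum_congr rfl (fun k _ => hform k), ← Finset.mul_sum,
    mul_div_mul_left _ _ hCpos.ne']
end

section
/- For K = 2 and rewards r₁ > r₂, the InfoNCA loss −Σ_{i=1,2} (exp(r_i/α)/(exp(r₁/α)+exp(r₂/α))) · log(exp(f_i)/(exp(f₁)+exp(f₂))) converges, as α → 0⁺, to the DPO loss −log σ(f₁ − f₂), where σ(t) = 1/(1+exp(−t)). -/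
open Filter Real Topology

noncomputable def sigmoid (t : ℝ) : ℝ := 1 / (1 + Real.exp (-t))

lemma exp_ratio_tendsto (c : ℝ) (hc : c < 0) :
    Tendsto (fun α : ℝ => Real.exp (c / α)) (nhdsWithin 0 (Set.Ioi 0)) (nhds 0) := by
  have h1 : Tendsto (fun α : ℝ => c / α) (nhdsWithin 0 (Set.Ioi 0)) atBot := by
    have : Tendsto (fun α : ℝ => α⁻¹) (nhdsWithin 0 (Set.Ioi 0)) atTop :=
      tendsto_inv_nhdsGT_zero
    have := this.const_mul_atTop_of_neg hc
    simpa [div_eq_mul_inv] using this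
  exact Real.tendsto_exp_atBot.comp h1

/-- As α → 0⁺, the K=2 InfoNCA loss converges to the DPO loss −log σ(f₁ − f₂). -/
theorem infonca_tendsto_dpo
    (r₁ r₂ : ℝ) (hr : r₁ > r₂) (f₁ f₂ : ℝ) :
    Tendsto (fun α : ℝ =>
        -((Real.exp (r₁ / α) / (Real.exp (r₁ / α) + Real.exp (r₂ / α))) *
            Real.log (Real.exp f₁ / (Real.exp f₁ + Real.exp f₂)) +
          (Real.exp (r₂ / α) / (Real.exp (r₁ / α) + Real.exp (r₂ / α))) *
            Real.log (Real.exp f₂ / (Real.exp f₁ + Real.exp f₂))))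
      (nhdsWithin 0 (Set.Ioi 0))
      (nhds (-Real.log (_root_.sigmoid (f₁ - f₂)))) := by
  set L₁ := Real.log (Real.exp f₁ / (Real.exp f₁ + Real.exp f₂)) with hL₁
  set L₂ := Real.log (Real.exp f₂ / (Real.exp f₁ + Real.exp f₂))
  have hc : r₂ - r₁ < 0 := by linarith
  have hexp := exp_ratio_tendsto (r₂ - r₁) hc
  -- w₁ → 1
  have hw₁ : Tendsto (fun α : ℝ =>
      Real.exp (r₁ / α) / (Real.exp (r₁ / α) + Real.exp (r₂ / α)))
      (nhdsWithin 0 (Set.Ioi 0)) (nhds 1) := by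
    have key : ∀ α : ℝ,
        Real.exp (r₁ / α) / (Real.exp (r₁ / α) + Real.exp (r₂ / α))
          = 1 / (1 + Real.exp ((r₂ - r₁) / α)) := by
      intro α
      rw [sub_div, Real.exp_sub]
      have h1 : Real.exp (r₁ / α) > 0 := Real.exp_pos _
      field_simp
    simp only [key]
    have : Tendsto (fun α : ℝ => 1 / (1 + Real.exp ((r₂ - r₁) / α)))
        (nhdsWithin 0 (Set.Ioi 0)) (nhds (1 / (1 + 0))) :=
      tendsto_const_nhds.div (tendsto_const_nhds.add hexp) (by norm_num)
    simpa using this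
  have hw₂ : Tendsto (fun α : ℝ =>
      Real.exp (r₂ / α) / (Real.exp (r₁ / α) + Real.exp (r₂ / α)))
      (nhdsWithin 0 (Set.Ioi 0)) (nhds 0) := by
    have key : ∀ α : ℝ,
        Real.exp (r₂ / α) / (Real.exp (r₁ / α) + Real.exp (r₂ / α))
          = Real.exp ((r₂ - r₁) / α) / (1 + Real.exp ((r₂ - r₁) / α)) := by
      intro α
      rw [sub_div, Real.exp_sub]
      have h1 : Real.exp (r₁ / α) > 0 := Real.exp_pos _
      field_simp
    simp only [key]
    have : Tendsto (fun α : ℝ => Real.exp ((r₂ - r₁) / α) / (1 + Real.exp ((r₂ - r₁) / α)))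
        (nhdsWithin 0 (Set.Ioi 0)) (nhds (0 / (1 + 0))) :=
      hexp.div (tendsto_const_nhds.add hexp) (by norm_num)
    simpa using this
  have hsig : _root_.sigmoid (f₁ - f₂) = Real.exp f₁ / (Real.exp f₁ + Real.exp f₂) := by
    unfold _root_.sigmoid
    rw [neg_sub, sub_eq_add_neg, Real.exp_add]
    have h1 : Real.exp f₁ > 0 := Real.exp_pos f₁
    have h2 : Real.exp f₂ > 0 := Real.exp_pos f₂
    rw [Real.exp_neg]
    field_simp
  have : Tendsto (fun α : ℝ =>
      -((Real.exp (r₁ / α) / (Real.exp (r₁ / α) + Real.exp (r₂ / α))) * L₁ +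
        (Real.exp (r₂ / α) / (Real.exp (r₁ / α) + Real.exp (r₂ / α))) * L₂))
      (nhdsWithin 0 (Set.Ioi 0)) (nhds (-(1 * L₁ + 0 * L₂))) :=
    ((hw₁.mul tendsto_const_nhds).add (hw₂.mul tendsto_const_nhds)).neg
  have heq : -(1 * L₁ + 0 * L₂) = -Real.log (_root_.sigmoid (f₁ - f₂)) := by
    rw [hsig, hL₁]; ring
  rw [← heq]
  exact this
end

section
/- Let μ be a probability distribution with full support on a finite set Y, r : Y → ℝ, α > 0, and Z = Σ_y μ(y)exp(r(y)/α). The NCA population objective L(f) = −Σ_y μ(y)[ (exp(r(y)/α)/Z)·log σ(f(y)) + log σ(−f(y)) ] over functions f : Y → ℝ is uniquely minimized by f*(y) = r(y)/α − log Z, and the corresponding π(y) = μ(y)exp(f*(y)) equals μ(y)exp(r(y)/α)/Z, a probability distribution. -/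
open Finset Real

lemma sigmoid_pos (t : ℝ) : 0 < _root_.sigmoid t := by
  unfold _root_.sigmoid; positivity

lemma sigmoid_lt_one (t : ℝ) : _root_.sigmoid t < 1 := by
  unfold _root_.sigmoid
  rw [div_lt_one (by positivity)]
  have := Real.exp_pos (-t)
  linarith

lemma sigmoid_neg_eq (t : ℝ) : _root_.sigmoid (-t) = 1 - _root_.sigmoid t := by
  unfold _root_.sigmoid
  have h1 : (0:ℝ) < 1 + Real.exp (-t) := by positivity
  have h2 : (0:ℝ) < 1 + Real.exp t := by positivity
  rw [neg_neg]
  field_simp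
  rw [add_sub_cancel_left, add_mul, one_mul, ← Real.exp_add, add_neg_cancel, Real.exp_zero]
  ring

lemma sigmoid_log (w : ℝ) (hw : 0 < w) : _root_.sigmoid (Real.log w) = w / (1 + w) := by
  unfold _root_.sigmoid
  rw [Real.exp_neg, Real.exp_log hw]
  rw [div_eq_div_iff (by positivity) (by linarith)]
  field_simp
  ring

lemma sigmoid_injective : Function.Injective _root_.sigmoid := by
  intro a b h
  unfold _root_.sigmoid at h
  have h1 : (0:ℝ) < 1 + Real.exp (-a) := by positivity
  have h2 : (0:ℝ) < 1 + Real.exp (-b) := by positivity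
  field_simp at h
  have := Real.exp_injective (by linarith : Real.exp (-b) = Real.exp (-a))
  linarith

lemma key_diff (w q : ℝ) (hw : 0 < w) (hq0 : 0 < q) (hq1 : q < 1) :
    w * Real.log q + Real.log (1-q) - (w * Real.log (w/(1+w)) + Real.log (1/(1+w)))
      = w * Real.log (q*(1+w)/w) + Real.log ((1-q)*(1+w)) := by
  have h1w : (0:ℝ) < 1 + w := by linarith
  have hq' : (1:ℝ) - q ≠ 0 := by linarith
  have hq'' : q ≠ 0 := ne_of_gt hq0
  have hw' : w ≠ 0 := ne_of_gt hw
  have h1w' : (1:ℝ) + w ≠ 0 := ne_of_gt h1w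
  rw [Real.log_div hw' h1w', Real.log_div one_ne_zero h1w',
      Real.log_div (by positivity) hw', Real.log_mul hq' h1w',
      Real.log_mul hq'' h1w']
  simp [Real.log_one]
  ring

lemma key_le (w q : ℝ) (hw : 0 < w) (hq0 : 0 < q) (hq1 : q < 1) :
    w * Real.log q + Real.log (1-q) ≤ w * Real.log (w/(1+w)) + Real.log (1/(1+w)) := by
  have h := key_diff w q hw hq0 hq1
  have ha : (0:ℝ) < q*(1+w)/w := by positivity
  have hb : (0:ℝ) < (1-q)*(1+w) := by
    apply mul_pos <;> linarith
  have la := Real.log_le_sub_one_of_pos ha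
  have lb := Real.log_le_sub_one_of_pos hb
  have key : w * (q*(1+w)/w - 1) + ((1-q)*(1+w) - 1) = 0 := by
    field_simp; ring
  nlinarith [mul_le_mul_of_nonneg_left la hw.le]

lemma key_lt (w q : ℝ) (hw : 0 < w) (hq0 : 0 < q) (hq1 : q < 1)
    (hne : q ≠ w/(1+w)) :
    w * Real.log q + Real.log (1-q) < w * Real.log (w/(1+w)) + Real.log (1/(1+w)) := by
  have h := key_diff w q hw hq0 hq1
  have h1w : (0:ℝ) < 1 + w := by linarith
  have ha : (0:ℝ) < q*(1+w)/w := by positivity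
  have hb : (0:ℝ) < (1-q)*(1+w) := by
    apply mul_pos <;> linarith
  have hane : q*(1+w)/w ≠ 1 := by
    intro hc
    apply hne
    field_simp at hc ⊢
    linarith
  have la := Real.log_lt_sub_one_of_pos ha hane
  have lb := Real.log_le_sub_one_of_pos hb
  have key : w * (q*(1+w)/w - 1) + ((1-q)*(1+w) - 1) = 0 := by
    field_simp; ring
  nlinarith [mul_lt_mul_of_pos_left la hw]

/-- Pointwise optimality: the per-point objective is maximized at `t = log w`. -/
lemma pointwise_le (w t : ℝ) (hw : 0 < w) :
    w * Real.log (_root_.sigmoid t) + Real.log (_root_.sigmoid (-t))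
      ≤ w * Real.log (_root_.sigmoid (Real.log w)) + Real.log (_root_.sigmoid (-(Real.log w))) := by
  rw [_root_.sigmoid_neg_eq t, _root_.sigmoid_neg_eq (Real.log w), _root_.sigmoid_log w hw]
  have h1w : (0:ℝ) < 1 + w := by linarith
  have : 1 - w / (1+w) = 1/(1+w) := by field_simp; ring
  rw [this]
  exact key_le w (_root_.sigmoid t) hw (_root_.sigmoid_pos t) (_root_.sigmoid_lt_one t)

lemma pointwise_lt (w t : ℝ) (hw : 0 < w) (hne : t ≠ Real.log w) :
    w * Real.log (_root_.sigmoid t) + Real.log (_root_.sigmoid (-t))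
      < w * Real.log (_root_.sigmoid (Real.log w)) + Real.log (_root_.sigmoid (-(Real.log w))) := by
  rw [_root_.sigmoid_neg_eq t, _root_.sigmoid_neg_eq (Real.log w), _root_.sigmoid_log w hw]
  have h1w : (0:ℝ) < 1 + w := by linarith
  have h2 : 1 - w / (1+w) = 1/(1+w) := by field_simp; ring
  rw [h2]
  apply key_lt w (_root_.sigmoid t) hw (_root_.sigmoid_pos t) (_root_.sigmoid_lt_one t)
  intro hc
  apply hne
  apply _root_.sigmoid_injective
  rw [hc, _root_.sigmoid_log w hw]

/-- NCA optimal solution (Theorem 2(b)): the NCA population objective is uniquely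
minimized by f*(y) = r(y)/α − log Z, and μ·exp(f*) equals the target policy
μ(y)exp(r(y)/α)/Z, a probability distribution. -/
theorem nca_population_minimizer
    {Y : Type*} [Fintype Y]
    (μ : Y → ℝ) (hμpos : ∀ y, 0 < μ y) (hμsum : ∑ y, μ y = 1)
    (r : Y → ℝ) (α : ℝ) (hα : 0 < α)
    (Z : ℝ) (hZ : Z = ∑ y, μ y * Real.exp (r y / α))
    (L : (Y → ℝ) → ℝ)
    (hL : ∀ f : Y → ℝ,
      L f = - ∑ y, μ y * ((Real.exp (r y / α) / Z) * Real.log (_root_.sigmoid (f y)) +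
        Real.log (_root_.sigmoid (-(f y)))))
    (fstar : Y → ℝ) (hfstar : ∀ y, fstar y = r y / α - Real.log Z) :
    (∀ g : Y → ℝ, L fstar ≤ L g) ∧
    (∀ g : Y → ℝ, L g = L fstar → g = fstar) ∧
    (∀ y, μ y * Real.exp (fstar y) = μ y * Real.exp (r y / α) / Z) ∧
    (∑ y, μ y * Real.exp (fstar y) = 1) := by
  have hY : Nonempty Y := by
    by_contra h
    rw [not_nonempty_iff] at h
    simp [Finset.univ_eq_empty] at hμsum
  have hZpos : 0 < Z := by
    rw [hZ]
    apply Finset.sum_pos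
    · intro y _
      exact mul_pos (hμpos y) (Real.exp_pos _)
    · exact Finset.univ_nonempty
  -- weight per point
  set w : Y → ℝ := fun y => Real.exp (r y / α) / Z with hwdef
  have hwpos : ∀ y, 0 < w y := fun y => div_pos (Real.exp_pos _) hZpos
  have hlogw : ∀ y, Real.log (w y) = fstar y := by
    intro y
    rw [hwdef]
    simp only
    rw [Real.log_div (Real.exp_ne_zero _) (ne_of_gt hZpos), Real.log_exp, hfstar y]
  have hexpfstar : ∀ y, Real.exp (fstar y) = w y := by
    intro y
    rw [← hlogw y, Real.exp_log (hwpos y)]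
  -- pointwise comparison for any g
  have hpt : ∀ (g : Y → ℝ) y,
      w y * Real.log (_root_.sigmoid (g y)) + Real.log (_root_.sigmoid (-(g y)))
        ≤ w y * Real.log (_root_.sigmoid (fstar y)) + Real.log (_root_.sigmoid (-(fstar y))) := by
    intro g y
    have := pointwise_le (w y) (g y) (hwpos y)
    rwa [hlogw y] at this
  have hptlt : ∀ (g : Y → ℝ) y, g y ≠ fstar y →
      w y * Real.log (_root_.sigmoid (g y)) + Real.log (_root_.sigmoid (-(g y)))
        < w y * Real.log (_root_.sigmoid (fstar y)) + Real.log (_root_.sigmoid (-(fstar y))) := by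
    intro g y hne
    have := pointwise_lt (w y) (g y) (hwpos y) (by rw [hlogw y]; exact hne)
    rwa [hlogw y] at this
  have hmin : ∀ g : Y → ℝ, L fstar ≤ L g := by
    intro g
    rw [hL g, hL fstar, neg_le_neg_iff]
    apply Finset.sum_le_sum
    intro y _
    exact mul_le_mul_of_nonneg_left (hpt g y) (hμpos y).le
  refine ⟨hmin, ?_, ?_, ?_⟩
  · intro g hgeq
    by_contra hne
    have : ∃ y, g y ≠ fstar y := by
      by_contra h
      push_neg at h
      exact hne (funext h)
    obtain ⟨y0, hy0⟩ := this
    have hstrict : ∑ y, μ y * (w y * Real.log (_root_.sigmoid (g y)) + Real.log (_root_.sigmoid (-(g y))))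
        < ∑ y, μ y * (w y * Real.log (_root_.sigmoid (fstar y)) + Real.log (_root_.sigmoid (-(fstar y)))) := by
      apply Finset.sum_lt_sum
      · intro y _
        exact mul_le_mul_of_nonneg_left (hpt g y) (hμpos y).le
      · exact ⟨y0, Finset.mem_univ y0,
          mul_lt_mul_of_pos_left (hptlt g y0 hy0) (hμpos y0)⟩
    rw [hL g, hL fstar] at hgeq
    have := neg_injective hgeq
    linarith
  · intro y
    rw [hexpfstar y, hwdef]
    ring
  · have : ∀ y, μ y * Real.exp (fstar y) = μ y * Real.exp (r y / α) / Z := by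
      intro y
      rw [hexpfstar y, hwdef]
      ring
    simp_rw [this]
    rw [← Finset.sum_div, ← hZ]
    field_simp
end

section
/- Let B ∈ {0,1} be uniform and Y be drawn from μ if B=0 and from π* if B=1, on a finite set with μ, π* everywhere positive. Then minimizing E[KL(P(B|Y) ‖ Q_θ(B|Y))] over θ, with Q_θ(B=1|y) = σ(f_θ(y)) and π* = μ·e^{r/α}/Z, is equivalent (up to an additive constant in θ) to minimizing −Σ_y μ(y)[ (e^{r(y)/α}/Z)·log σ(f_θ(y)) + log σ(−f_θ(y)) ]. -/
open Finset Real

/-- NCA Theorem 2(a): the expected posterior-KL objective of the binary NCE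
classification (B uniform, Y ~ μ if B=0 and Y ~ π* = μ·e^{r/α}/Z if B=1, model
posterior Q_θ(B=1|y) = σ(f_θ(y))) equals, up to a positive scaling and an additive
constant independent of θ, the importance-weighted binary cross-entropy NCA loss. -/
theorem nca_kl_equiv_weighted_bce
    {Y Θ : Type*} [Fintype Y]
    (μ : Y → ℝ) (hμpos : ∀ y, 0 < μ y) (hμsum : ∑ y, μ y = 1)
    (r : Y → ℝ) (α : ℝ) (hα : 0 < α)
    (Z : ℝ) (hZ : Z = ∑ y, μ y * Real.exp (r y / α))
    (piStar : Y → ℝ) (hπ : ∀ y, piStar y = μ y * Real.exp (r y / α) / Z)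
    (f : Θ → Y → ℝ)
    (m : Y → ℝ) (hm : ∀ y, m y = (1 / 2) * μ y + (1 / 2) * piStar y)
    (P1 : Y → ℝ) (hP1 : ∀ y, P1 y = piStar y / (μ y + piStar y))
    (KLobj : Θ → ℝ)
    (hKLobj : ∀ θ, KLobj θ = ∑ y, m y *
      (P1 y * Real.log (P1 y / _root_.sigmoid (f θ y)) +
       (1 - P1 y) * Real.log ((1 - P1 y) / _root_.sigmoid (-(f θ y)))))
    (NCAobj : Θ → ℝ)
    (hNCAobj : ∀ θ, NCAobj θ = - ∑ y, μ y *
      ((Real.exp (r y / α) / Z) * Real.log (_root_.sigmoid (f θ y)) +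
        Real.log (_root_.sigmoid (-(f θ y))))) :
    ∃ C : ℝ, ∀ θ : Θ, KLobj θ = (1 / 2) * NCAobj θ + C := by
  classical
  have hne : (Finset.univ : Finset Y).Nonempty := by
    rcases (Finset.univ (α := Y)).eq_empty_or_nonempty with h | h
    · rw [h] at hμsum; simp at hμsum
    · exact h
  have hZpos : 0 < Z := by
    rw [hZ]
    exact Finset.sum_pos (fun y _ => mul_pos (hμpos y) (Real.exp_pos _)) hne
  have hπpos : ∀ y, 0 < piStar y := by
    intro y; rw [hπ y]
    exact div_pos (mul_pos (hμpos y) (Real.exp_pos _)) hZpos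
  have hσpos : ∀ t, 0 < _root_.sigmoid t := by
    intro t; unfold _root_.sigmoid; positivity
  have hspos : ∀ y, 0 < μ y + piStar y := fun y => add_pos (hμpos y) (hπpos y)
  have hP1pos : ∀ y, 0 < P1 y := by
    intro y; rw [hP1 y]; exact div_pos (hπpos y) (hspos y)
  have hP1lt : ∀ y, P1 y < 1 := by
    intro y; rw [hP1 y]
    rw [div_lt_one (hspos y)]
    linarith [hμpos y]
  refine ⟨∑ y, m y * (P1 y * Real.log (P1 y) + (1 - P1 y) * Real.log (1 - P1 y)),
    fun θ => ?_⟩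
  have key : ∀ y, m y * (P1 y * Real.log (P1 y / _root_.sigmoid (f θ y)) +
       (1 - P1 y) * Real.log ((1 - P1 y) / _root_.sigmoid (-(f θ y)))) =
      (1 / 2) * (- (μ y * ((Real.exp (r y / α) / Z) * Real.log (_root_.sigmoid (f θ y)) +
        Real.log (_root_.sigmoid (-(f θ y)))))) +
      m y * (P1 y * Real.log (P1 y) + (1 - P1 y) * Real.log (1 - P1 y)) := by
    intro y
    have hmP1 : m y * P1 y = (1 / 2) * (μ y * (Real.exp (r y / α) / Z)) := by
      rw [hm y, hP1 y]
      have hπy := hπ y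
      field_simp [ne_of_gt (hspos y), ne_of_gt hZpos] at hπy ⊢
      linear_combination hπy
    have hm1P1 : m y * (1 - P1 y) = (1 / 2) * μ y := by
      rw [hm y, hP1 y]
      field_simp [ne_of_gt (hspos y)]
      ring
    rw [Real.log_div (ne_of_gt (hP1pos y)) (ne_of_gt (hσpos _)),
        Real.log_div (by linarith [hP1lt y] : (1 : ℝ) - P1 y ≠ 0) (ne_of_gt (hσpos _))]
    have expand : m y * (P1 y * (Real.log (P1 y) - Real.log (_root_.sigmoid (f θ y))) +
        (1 - P1 y) * (Real.log (1 - P1 y) - Real.log (_root_.sigmoid (-(f θ y))))) =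
        m y * (P1 y * Real.log (P1 y) + (1 - P1 y) * Real.log (1 - P1 y))
        - (m y * P1 y) * Real.log (_root_.sigmoid (f θ y))
        - (m y * (1 - P1 y)) * Real.log (_root_.sigmoid (-(f θ y))) := by ring
    rw [expand, hmP1, hm1P1]; ring
  rw [hKLobj, hNCAobj, Finset.sum_congr rfl (fun y _ => key y),
    Finset.sum_add_distrib, ← Finset.mul_sum, ← Finset.sum_neg_distrib]
end
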